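/- Let A ∈ SL(2,ℂ). Then A · diag(2,0) · A* = diag(2,0) (where diag(2,0) is the 2×2 matrix [[2,0],[0,0]] and A* is the conjugate transpose) holds if and only if A ∈ E(2). In other words, E(2) is exactly the little group in SL(2,ℂ) of the lightlike reference momentum p̄ = (1,0,0,1), whose associated Hermitian matrix is diag(2,0). -/

import Mathlib

open Matrix

/-- `E(2)`: the little group of the lightlike reference momentum, i.e. matrices
`A ∈ SL(2,ℂ)` with `A₂₁ = 0` and `|A₁₁| = 1`. -/
def E2 : Set (Matrix (Fin 2) (Fin 2) ℂ) :=
  {A | A.det = 1 ∧ A 1 0 = 0 ∧ ‖A 0 0‖ = 1}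

/-- For `A ∈ SL(2,ℂ)`, `A · diag(2,0) · A* = diag(2,0)` iff `A ∈ E(2)`. -/
theorem little_group_of_lightlike_momentum (A : Matrix (Fin 2) (Fin 2) ℂ)
    (hA : A.det = 1) :
    A * !![(2 : ℂ), 0; 0, 0] * Aᴴ = !![(2 : ℂ), 0; 0, 0] ↔ A ∈ E2 := by
  have key : ∀ i j, (A * !![(2 : ℂ), 0; 0, 0] * Aᴴ) i j
      = 2 * (A i 0 * (starRingEnd ℂ) (A j 0)) := by
    intro i j
    simp [mul_apply, Fin.sum_univ_two, conjTranspose_apply]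
    ring
  constructor
  · intro h
    have h11 := congrFun (congrFun h 1) 1
    rw [key, Complex.mul_conj, show (!![(2:ℂ),0;0,0]) 1 1 = 0 from by norm_num] at h11
    have hc : A 1 0 = 0 := by
      have : (Complex.normSq (A 1 0) : ℂ) = 0 := by linear_combination h11 / 2
      exact Complex.normSq_eq_zero.mp (by exact_mod_cast this)
    have h00 := congrFun (congrFun h 0) 0
    rw [key, Complex.mul_conj, show (!![(2:ℂ),0;0,0]) 0 0 = 2 from by norm_num] at h00
    have h2 : Complex.normSq (A 0 0) = 1 := by
      have : (Complex.normSq (A 0 0) : ℂ) = 1 := by linear_combination h00 / 2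
      exact_mod_cast this
    rw [← Complex.sq_norm] at h2
    have habs : ‖A 0 0‖ = 1 := by
      nlinarith [norm_nonneg (A 0 0)]
    exact ⟨hA, hc, habs⟩
  · rintro ⟨-, hc, habs⟩
    have haa : A 0 0 * (starRingEnd ℂ) (A 0 0) = 1 := by
      rw [Complex.mul_conj]
      norm_cast
      rw [Complex.normSq_eq_norm_sq, habs]; norm_num
    ext i j
    rw [key]
    fin_cases i <;> fin_cases j <;> simp [hc, haa]
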